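/- The vectors u_j(k) = (1/√N_j(k))·[ (c₁s₂ e^{ik} - s₁c₂), i(-c₁c₂ sin k - (-1)^j √(1-A(k)²)) ]ᵀ for j = 1, 2 form an orthonormal basis of ℂ², provided N₁(k), N₂(k) > 0, where A(k) = c₁c₂ cos k + s₁s₂ and N_j(k) = 2√(1-A²)(√(1-A²) + (-1)^j c₁c₂ sin k). -/

import Mathlib

/-- `A(k) = c₁c₂ cos k + s₁s₂`. -/
noncomputable def Aval (θ₁ θ₂ k : ℝ) : ℝ :=
  Real.cos θ₁ * Real.cos θ₂ * Real.cos k + Real.sin θ₁ * Real.sin θ₂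

/-- `N_j(k) = 2√(1-A²)(√(1-A²) + (-1)^j c₁c₂ sin k)`. -/
noncomputable def Nfun (θ₁ θ₂ : ℝ) (j : ℕ) (k : ℝ) : ℝ :=
  2 * Real.sqrt (1 - (Aval θ₁ θ₂ k) ^ 2) *
    (Real.sqrt (1 - (Aval θ₁ θ₂ k) ^ 2)
      + (-1 : ℝ) ^ j * (Real.cos θ₁ * Real.cos θ₂ * Real.sin k))

/-- The eigenvector `u_j(k)` of `Û₁(k)Û₂(k)`, as an element of `ℂ²`. -/
noncomputable def uvec (θ₁ θ₂ k : ℝ) (j : ℕ) : EuclideanSpace ℂ (Fin 2) :=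
  ((1 / Real.sqrt (Nfun θ₁ θ₂ j k) : ℝ) : ℂ) •
    (WithLp.equiv 2 (Fin 2 → ℂ)).symm
      ![(Real.cos θ₁ * Real.sin θ₂ : ℝ) * Complex.exp ((k : ℂ) * Complex.I)
          - ((Real.sin θ₁ * Real.cos θ₂ : ℝ) : ℂ),
        Complex.I * ((-(Real.cos θ₁ * Real.cos θ₂ * Real.sin k)
          - (-1 : ℝ) ^ j * Real.sqrt (1 - (Aval θ₁ θ₂ k) ^ 2) : ℝ) : ℂ)]

lemma inner_formula (θ₁ θ₂ k : ℝ) (j j' : ℕ) :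
    (inner ℂ (uvec θ₁ θ₂ k j) (uvec θ₁ θ₂ k j') : ℂ) =
    (((1/Real.sqrt (Nfun θ₁ θ₂ j k)) * (1/Real.sqrt (Nfun θ₁ θ₂ j' k)) *
      ((Real.cos θ₁*Real.sin θ₂*Real.cos k - Real.sin θ₁*Real.cos θ₂)^2
        + (Real.cos θ₁*Real.sin θ₂*Real.sin k)^2
        + (-(Real.cos θ₁ * Real.cos θ₂ * Real.sin k) - (-1:ℝ)^j * Real.sqrt (1 - (Aval θ₁ θ₂ k) ^ 2))
          * (-(Real.cos θ₁ * Real.cos θ₂ * Real.sin k) - (-1:ℝ)^j' * Real.sqrt (1 - (Aval θ₁ θ₂ k) ^ 2))) : ℝ) : ℂ) := by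
  simp only [uvec, PiLp.inner_apply, Fin.sum_univ_two, PiLp.smul_apply,
    WithLp.equiv_symm_apply, PiLp.toLp_apply, Matrix.cons_val_zero, Matrix.cons_val_one, Matrix.head_cons,
    Complex.exp_mul_I, smul_eq_mul, map_mul, map_sub, map_add, Complex.conj_I,
    ← Complex.ofReal_cos, ← Complex.ofReal_sin, Complex.conj_ofReal, RCLike.inner_apply]
  push_cast
  ring_nf
  simp [Complex.ext_iff]
  ring_nf
  constructor <;> trivial

theorem stmt_10 (θ₁ θ₂ k : ℝ)
    (hN₁ : 0 < Nfun θ₁ θ₂ 1 k) (hN₂ : 0 < Nfun θ₁ θ₂ 2 k) :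
    ∃ B : OrthonormalBasis (Fin 2) ℂ (EuclideanSpace ℂ (Fin 2)),
      ⇑B = ![uvec θ₁ θ₂ k 1, uvec θ₁ θ₂ k 2] := by
  have hS2 : (Real.sqrt (1 - (Aval θ₁ θ₂ k) ^ 2)) ^ 2 = 1 - (Aval θ₁ θ₂ k) ^ 2 := by
    rcases le_or_gt (1 - (Aval θ₁ θ₂ k) ^ 2) 0 with h | h
    · exfalso
      have : Real.sqrt (1 - (Aval θ₁ θ₂ k) ^ 2) = 0 := Real.sqrt_eq_zero'.2 h
      simp only [Nfun, this] at hN₁; linarith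
    · exact Real.sq_sqrt h.le
  have keyE : (Real.cos θ₁*Real.sin θ₂*Real.cos k - Real.sin θ₁*Real.cos θ₂)^2
      + (Real.cos θ₁*Real.sin θ₂*Real.sin k)^2
      = (Real.sqrt (1 - (Aval θ₁ θ₂ k) ^ 2))^2 - (Real.cos θ₁ * Real.cos θ₂ * Real.sin k)^2 := by
    simp only [Aval] at hS2 ⊢
    linear_combination
      (Real.cos θ₁^2*Real.sin θ₂^2 + Real.cos θ₁^2*Real.cos θ₂^2) * Real.sin_sq_add_cos_sq k
      + (Real.cos θ₂^2 + Real.sin θ₂^2) * Real.sin_sq_add_cos_sq θ₁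
      + Real.sin_sq_add_cos_sq θ₂ - hS2
  have hm1 : Real.sqrt (Nfun θ₁ θ₂ 1 k) * Real.sqrt (Nfun θ₁ θ₂ 1 k) = Nfun θ₁ θ₂ 1 k :=
    Real.mul_self_sqrt hN₁.le
  have hm2 : Real.sqrt (Nfun θ₁ θ₂ 2 k) * Real.sqrt (Nfun θ₁ θ₂ 2 k) = Nfun θ₁ θ₂ 2 k :=
    Real.mul_self_sqrt hN₂.le
  have hs1 : Real.sqrt (Nfun θ₁ θ₂ 1 k) ≠ 0 := (Real.sqrt_pos.2 hN₁).ne'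
  have hs2 : Real.sqrt (Nfun θ₁ θ₂ 2 k) ≠ 0 := (Real.sqrt_pos.2 hN₂).ne'
  have hE11 : (Real.cos θ₁*Real.sin θ₂*Real.cos k - Real.sin θ₁*Real.cos θ₂)^2
      + (Real.cos θ₁*Real.sin θ₂*Real.sin k)^2
      + (-(Real.cos θ₁ * Real.cos θ₂ * Real.sin k) - (-1:ℝ)^1 * Real.sqrt (1 - (Aval θ₁ θ₂ k) ^ 2))
        * (-(Real.cos θ₁ * Real.cos θ₂ * Real.sin k) - (-1:ℝ)^1 * Real.sqrt (1 - (Aval θ₁ θ₂ k) ^ 2))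
      = Nfun θ₁ θ₂ 1 k := by
    simp only [Nfun]; linear_combination keyE
  have hE22 : (Real.cos θ₁*Real.sin θ₂*Real.cos k - Real.sin θ₁*Real.cos θ₂)^2
      + (Real.cos θ₁*Real.sin θ₂*Real.sin k)^2
      + (-(Real.cos θ₁ * Real.cos θ₂ * Real.sin k) - (-1:ℝ)^2 * Real.sqrt (1 - (Aval θ₁ θ₂ k) ^ 2))
        * (-(Real.cos θ₁ * Real.cos θ₂ * Real.sin k) - (-1:ℝ)^2 * Real.sqrt (1 - (Aval θ₁ θ₂ k) ^ 2))
      = Nfun θ₁ θ₂ 2 k := by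
    simp only [Nfun]; linear_combination keyE
  have hE12 : (Real.cos θ₁*Real.sin θ₂*Real.cos k - Real.sin θ₁*Real.cos θ₂)^2
      + (Real.cos θ₁*Real.sin θ₂*Real.sin k)^2
      + (-(Real.cos θ₁ * Real.cos θ₂ * Real.sin k) - (-1:ℝ)^1 * Real.sqrt (1 - (Aval θ₁ θ₂ k) ^ 2))
        * (-(Real.cos θ₁ * Real.cos θ₂ * Real.sin k) - (-1:ℝ)^2 * Real.sqrt (1 - (Aval θ₁ θ₂ k) ^ 2))
      = 0 := by
    linear_combination keyE
  have hE21 : (Real.cos θ₁*Real.sin θ₂*Real.cos k - Real.sin θ₁*Real.cos θ₂)^2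
      + (Real.cos θ₁*Real.sin θ₂*Real.sin k)^2
      + (-(Real.cos θ₁ * Real.cos θ₂ * Real.sin k) - (-1:ℝ)^2 * Real.sqrt (1 - (Aval θ₁ θ₂ k) ^ 2))
        * (-(Real.cos θ₁ * Real.cos θ₂ * Real.sin k) - (-1:ℝ)^1 * Real.sqrt (1 - (Aval θ₁ θ₂ k) ^ 2))
      = 0 := by
    linear_combination keyE
  have h11 : 1/Real.sqrt (Nfun θ₁ θ₂ 1 k) * (1/Real.sqrt (Nfun θ₁ θ₂ 1 k)) * Nfun θ₁ θ₂ 1 k = 1 := by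
    field_simp
    rw [Real.sq_sqrt hN₁.le]
  have h22 : 1/Real.sqrt (Nfun θ₁ θ₂ 2 k) * (1/Real.sqrt (Nfun θ₁ θ₂ 2 k)) * Nfun θ₁ θ₂ 2 k = 1 := by
    field_simp
    rw [Real.sq_sqrt hN₂.le]
  have horth : Orthonormal ℂ ![uvec θ₁ θ₂ k 1, uvec θ₁ θ₂ k 2] := by
    rw [orthonormal_iff_ite]
    intro i j
    fin_cases i <;> fin_cases j <;>
      simp only [Fin.mk_zero, Fin.mk_one, Fin.isValue, Matrix.cons_val_zero,
        Matrix.cons_val_one, Matrix.head_cons, inner_formula, hE11, hE22, hE12, hE21,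
        mul_zero, h11, h22] <;>
      norm_num
  have hcard : Fintype.card (Fin 2) = Module.finrank ℂ (EuclideanSpace ℂ (Fin 2)) := by simp
  refine ⟨(basisOfOrthonormalOfCardEqFinrank horth hcard).toOrthonormalBasis
    (by rwa [coe_basisOfOrthonormalOfCardEqFinrank]), ?_⟩
  rw [Module.Basis.coe_toOrthonormalBasis, coe_basisOfOrthonormalOfCardEqFinrank]
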